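/- Let G be a countable group acting freely on a countable set I, let F : I → [1/3, 2/3], and suppose for every g ∈ G that c_g(i) := F(i) - F(g^{-1}·i) defines an element of ℓ²(I). Let μ_i be the measure on {0,1} with μ_i(0) = F(i) and let ω_n(g,x) = ∏_{k=1}^n μ_{g·i_k}(x_{i_k})/μ_{i_k}(x_{i_k}) for an enumeration I = {i₁, i₂, …}. Then for every g ∈ G and every n, ∫_X √(ω_n(g,x)) dμ(x) = ∏_{k=1}^n (√(F(i_k)F(g·i_k)) + √((1-F(i_k))(1-F(g·i_k)))) ≥ exp(-(3/5) ‖c_g‖₂²). -/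

import Mathlib

open MeasureTheory

private lemma key6' (d U V : ℝ) (hd0 : 0 ≤ d) (hd3 : d ≤ 1/3)
    (hU : 4/3 + d ≤ U) (hV : 4/3 + d ≤ V)
    (hS1 : 4 - (3/2)*d^2 ≤ U + V) (hS2 : U + V ≤ 4) :
    (U+V)*(5+3*d^2) ≤ 6*(U*V) := by
  nlinarith [mul_nonneg (sub_nonneg.2 hU) (sub_nonneg.2 hV), sq_nonneg d,
    mul_nonneg hd0 (sub_nonneg.2 hd3), sq_nonneg (U-V),
    mul_nonneg (mul_nonneg hd0 hd0) (sub_nonneg.2 hd3),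
    mul_nonneg (mul_nonneg hd0 (sub_nonneg.2 hd3)) (sub_nonneg.2 hd3),
    mul_nonneg (sub_nonneg.2 hS1) hd0,
    mul_nonneg (sub_nonneg.2 hS1) (sub_nonneg.2 hd3),
    mul_nonneg (mul_nonneg hd0 hd0) hd0]

set_option maxHeartbeats 2000000 in
private lemma keyPQ' (a b P Q : ℝ) (ha1 : 1/3 ≤ a) (ha2 : a ≤ 2/3) (hb1 : 1/3 ≤ b) (hb2 : b ≤ 2/3)
    (hba : b ≤ a) (hP2 : P^2 = a*b) (hQ2 : Q^2 = (1-a)*(1-b))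
    (hP1 : 1/3 ≤ P) (hQ1 : 1/3 ≤ Q) :
    1 ≤ (P + Q) * (1 + (3/5)*(a-b)^2) := by
  have hP0 : (0:ℝ) ≤ P := by linarith
  have hQ0 : (0:ℝ) ≤ Q := by linarith
  have hd0 : 0 ≤ a - b := by linarith
  have hd3 : a - b ≤ 1/3 := by linarith
  have hUpos : (0:ℝ) < a + b + 2*P := by linarith
  have hVpos : (0:ℝ) < (2 - a - b) + 2*Q := by linarith
  have hU : 4/3 + (a-b) ≤ a + b + 2*P := by linarith
  have hV : 4/3 + (a-b) ≤ (2 - a - b) + 2*Q := by linarith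
  have hUt : (a + b + 2*P) * (a + b - 2*P) = (a-b)^2 := by linear_combination (-4:ℝ) * hP2
  have hVt : ((2 - a - b) + 2*Q) * ((2 - a - b) - 2*Q) = (a-b)^2 := by
    linear_combination (-4:ℝ) * hQ2
  have hPQsq : (2*(P*Q))^2 ≤ (a + b - 2*(a*b))^2 := by
    nlinarith [sq_nonneg (a*(1-b) - b*(1-a)), hP2, hQ2]
  have habnn : 0 ≤ a + b - 2*(a*b) := by nlinarith
  have hPQ : 2*(P*Q) ≤ a + b - 2*(a*b) :=
    le_of_pow_le_pow_left₀ two_ne_zero habnn hPQsq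
  have hS2 : (a + b + 2*P) + ((2 - a - b) + 2*Q) ≤ 4 := by
    nlinarith [hP2, hQ2, hPQ]
  have h2Ple : 2*P ≤ a + b :=
    le_of_pow_le_pow_left₀ two_ne_zero (by linarith) (by nlinarith [hP2, sq_nonneg (a-b)])
  have h2Qle : 2*Q ≤ (2 - a - b) :=
    le_of_pow_le_pow_left₀ two_ne_zero (by linarith) (by nlinarith [hQ2, sq_nonneg (a-b)])
  have h2 : a + b - 2*P ≤ (3/4)*(a-b)^2 := by
    nlinarith [hUt, mul_nonneg (sub_nonneg.2 h2Ple) (sub_nonneg.2 hU)]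
  have h2' : (2 - a - b) - 2*Q ≤ (3/4)*(a-b)^2 := by
    nlinarith [hVt, mul_nonneg (sub_nonneg.2 h2Qle) (sub_nonneg.2 hV)]
  have hS1 : 4 - (3/2)*(a-b)^2 ≤ (a + b + 2*P) + ((2 - a - b) + 2*Q) := by linarith
  have h6 := key6' (a-b) (a + b + 2*P) ((2 - a - b) + 2*Q) hd0 hd3 hU hV hS1 hS2
  have hId : (4 - (a + b + 2*P) - ((2 - a - b) + 2*Q)) * ((a + b + 2*P)*((2 - a - b) + 2*Q))
      = (a-b)^2 * ((a + b + 2*P) + ((2 - a - b) + 2*Q)) := by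
    calc (4 - (a + b + 2*P) - ((2 - a - b) + 2*Q)) * ((a + b + 2*P)*((2 - a - b) + 2*Q))
        = ((a + b + 2*P) * (a + b - 2*P)) * ((2 - a - b) + 2*Q)
          + (((2 - a - b) + 2*Q) * ((2 - a - b) - 2*Q)) * (a + b + 2*P) := by ring
      _ = _ := by rw [hUt, hVt]; ring
  have hX : (((a + b + 2*P) + ((2 - a - b) + 2*Q) - 2)*(5 + 3*(a-b)^2) - 10)
        * ((a + b + 2*P)*((2 - a - b) + 2*Q))
      = (a-b)^2 * (6*((a + b + 2*P)*((2 - a - b) + 2*Q))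
          - (5+3*(a-b)^2)*((a + b + 2*P) + ((2 - a - b) + 2*Q))) := by
    linear_combination (-(5 + 3*(a-b)^2)) * hId
  have hXpos : 0 ≤ ((a + b + 2*P) + ((2 - a - b) + 2*Q) - 2)*(5 + 3*(a-b)^2) - 10 := by
    nlinarith [hX, mul_pos hUpos hVpos, h6, sq_nonneg (a-b)]
  nlinarith [hXpos]

private lemma key' (a b : ℝ) (ha : a ∈ Set.Icc (1/3:ℝ) (2/3)) (hb : b ∈ Set.Icc (1/3:ℝ) (2/3)) :
    Real.exp (-(3/5) * (a - b)^2) ≤ Real.sqrt (a*b) + Real.sqrt ((1-a)*(1-b)) := by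
  obtain ⟨ha1, ha2⟩ := ha
  obtain ⟨hb1, hb2⟩ := hb
  have hab : (0:ℝ) ≤ a * b := by nlinarith
  have h1ab : (0:ℝ) ≤ (1-a)*(1-b) := by nlinarith
  have third : (1/3:ℝ) = Real.sqrt (1/9) := by
    rw [show (1/9:ℝ) = (1/3)^2 by norm_num, Real.sqrt_sq]; norm_num
  have hP1 : (1/3:ℝ) ≤ Real.sqrt (a*b) := by
    rw [third]; exact Real.sqrt_le_sqrt (by nlinarith)
  have hQ1 : (1/3:ℝ) ≤ Real.sqrt ((1-a)*(1-b)) := by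
    rw [third]; exact Real.sqrt_le_sqrt (by nlinarith)
  have hmain : 1 ≤ (Real.sqrt (a*b) + Real.sqrt ((1-a)*(1-b))) * (1 + (3/5)*(a-b)^2) := by
    rcases le_total b a with h | h
    · exact keyPQ' a b _ _ ha1 ha2 hb1 hb2 h (Real.sq_sqrt hab) (Real.sq_sqrt h1ab) hP1 hQ1
    · have hsym := keyPQ' b a (Real.sqrt (a*b)) (Real.sqrt ((1-a)*(1-b))) hb1 hb2 ha1 ha2 h
        (by rw [mul_comm b a]; exact Real.sq_sqrt hab)
        (by rw [mul_comm (1-b) (1-a)]; exact Real.sq_sqrt h1ab) hP1 hQ1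
      have hbab : (b-a)^2 = (a-b)^2 := by ring
      rwa [hbab] at hsym
  have hpos : (0:ℝ) < 1 + (3/5)*(a-b)^2 := by positivity
  have h2 : Real.exp (-((3/5)*(a-b)^2)) ≤ 1 / (1 + (3/5)*(a-b)^2) := by
    rw [Real.exp_neg, inv_eq_one_div]
    apply one_div_le_one_div_of_le hpos
    exact (Real.add_one_le_exp _).trans_eq' (by ring)
  have h3 : 1 / (1 + (3/5)*(a-b)^2) ≤ Real.sqrt (a*b) + Real.sqrt ((1-a)*(1-b)) := by
    rw [div_le_iff₀ hpos]; linarith [hmain]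
  calc Real.exp (-(3/5) * (a-b)^2) = Real.exp (-((3/5)*(a-b)^2)) := by ring_nf
    _ ≤ _ := h2.trans h3

private lemma bool_int' (f : Bool → ℝ) (c d : ℝ) (hc : 0 ≤ c) (hd : 0 ≤ d) :
    ∫ x : Bool, f x ∂(ENNReal.ofReal c • Measure.dirac false + ENNReal.ofReal d • Measure.dirac true)
      = c * f false + d * f true := by
  haveI h1 : IsFiniteMeasure (ENNReal.ofReal c • Measure.dirac false : Measure Bool) := by
    constructor; simp [lt_top_iff_ne_top]
  haveI h2 : IsFiniteMeasure (ENNReal.ofReal d • Measure.dirac true : Measure Bool) := by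
    constructor; simp [lt_top_iff_ne_top]
  rw [integral_add_measure Integrable.of_finite Integrable.of_finite,
    integral_smul_measure, integral_smul_measure, integral_dirac, integral_dirac,
    ENNReal.toReal_ofReal hc, ENNReal.toReal_ofReal hd]
  simp [smul_eq_mul]

private lemma sqrt_finset_prod' {α : Type*} (s : Finset α) (f : α → ℝ) (h : ∀ i, 0 ≤ f i) :
    Real.sqrt (∏ i ∈ s, f i) = ∏ i ∈ s, Real.sqrt (f i) := by
  induction s using Finset.cons_induction with
  | empty => simp
  | cons a s ha ih => rw [Finset.prod_cons, Finset.prod_cons, Real.sqrt_mul (h a), ih]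

private lemma mul_sqrt_div' (a b : ℝ) (ha : 0 < a) (hb : 0 ≤ b) :
    a * Real.sqrt (b / a) = Real.sqrt (a * b) := by
  rw [Real.sqrt_div hb a, Real.sqrt_mul ha.le b]
  calc a * (Real.sqrt b / Real.sqrt a) = (a / Real.sqrt a) * Real.sqrt b := by ring
    _ = Real.sqrt a * Real.sqrt b := by rw [Real.div_sqrt]

open MeasureTheory in
theorem stmt19 {G I : Type*} [Group G] [Countable G] [Countable I] [MulAction G I]
    (hfree : ∀ (g : G) (i : I), g • i = i → g = 1)
    (F : I → ℝ) (hF : ∀ i, F i ∈ Set.Icc (1/3 : ℝ) (2/3))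
    (c : G → I → ℝ) (hc : ∀ g i, c g i = F i - F (g⁻¹ • i))
    (hl2 : ∀ g : G, Summable (fun i : I => (c g i) ^ 2))
    (e : ℕ ≃ I)
    (w : I → Bool → ℝ) (hw : ∀ i x, w i x = if x then 1 - F i else F i)
    (g : G) (n : ℕ) :
    (∫ x : Fin n → Bool,
        Real.sqrt (∏ k : Fin n, w (g • e (k : ℕ)) (x k) / w (e (k : ℕ)) (x k))
        ∂(Measure.pi fun k : Fin n =>
            ENNReal.ofReal (F (e (k : ℕ))) • Measure.dirac false +
              ENNReal.ofReal (1 - F (e (k : ℕ))) • Measure.dirac true))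
      = ∏ k : Fin n, (Real.sqrt (F (e (k : ℕ)) * F (g • e (k : ℕ))) +
          Real.sqrt ((1 - F (e (k : ℕ))) * (1 - F (g • e (k : ℕ))))) ∧
    Real.exp (-(3/5) * ∑' i : I, (c g i) ^ 2) ≤
      ∏ k : Fin n, (Real.sqrt (F (e (k : ℕ)) * F (g • e (k : ℕ))) +
          Real.sqrt ((1 - F (e (k : ℕ))) * (1 - F (g • e (k : ℕ))))) := by
  have hw0 : ∀ i x, 0 < w i x := by
    intro i x
    rw [hw]
    cases x
    · simpa using lt_of_lt_of_le (by norm_num) (hF i).1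
    · have := (hF i).2; simp only [if_true]; linarith
  constructor
  · -- integral computation
    set μs : Fin n → Measure Bool := fun k =>
      ENNReal.ofReal (F (e (k : ℕ))) • Measure.dirac false +
        ENNReal.ofReal (1 - F (e (k : ℕ))) • Measure.dirac true with hμs
    have hfin : ∀ k, IsFiniteMeasure (μs k) := by
      intro k
      have hA : IsFiniteMeasure (ENNReal.ofReal (F (e (k : ℕ))) • Measure.dirac false : Measure Bool) := by
        constructor; simp [lt_top_iff_ne_top]
      have hB : IsFiniteMeasure (ENNReal.ofReal (1 - F (e (k : ℕ))) • Measure.dirac true : Measure Bool) := by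
        constructor; simp [lt_top_iff_ne_top]
      rw [hμs]; infer_instance
    have hfe : (fun x : Fin n → Bool =>
        Real.sqrt (∏ k : Fin n, w (g • e (k : ℕ)) (x k) / w (e (k : ℕ)) (x k)))
        = fun x => ∏ k : Fin n, Real.sqrt (w (g • e (k : ℕ)) (x k) / w (e (k : ℕ)) (x k)) :=
      funext fun x => sqrt_finset_prod' _ _ (fun k => div_nonneg (hw0 _ _).le (hw0 _ _).le)
    calc (∫ x : Fin n → Bool,
          Real.sqrt (∏ k : Fin n, w (g • e (k : ℕ)) (x k) / w (e (k : ℕ)) (x k)) ∂(Measure.pi μs))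
        = ∫ x : Fin n → Bool,
            ∏ k : Fin n, Real.sqrt (w (g • e (k : ℕ)) (x k) / w (e (k : ℕ)) (x k)) ∂(Measure.pi μs) := by
          rw [hfe]
      _ = ∏ k : Fin n, ∫ x : Bool, Real.sqrt (w (g • e (k : ℕ)) x / w (e (k : ℕ)) x) ∂(μs k) :=
          @MeasureTheory.integral_fin_nat_prod_eq_prod ℝ _ n (fun _ => Bool) (fun _ => inferInstance)
            μs (fun k => by change SigmaFinite (μs k); haveI := hfin k; infer_instance)
            (fun k x => Real.sqrt (w (g • e (k : ℕ)) x / w (e (k : ℕ)) x))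
      _ = ∏ k : Fin n, (Real.sqrt (F (e (k : ℕ)) * F (g • e (k : ℕ))) +
            Real.sqrt ((1 - F (e (k : ℕ))) * (1 - F (g • e (k : ℕ))))) := by
          refine Finset.prod_congr rfl fun k _ => ?_
          have hF1 := hF (e (k : ℕ))
          have h0a : (0:ℝ) < F (e (k : ℕ)) := lt_of_lt_of_le (by norm_num) hF1.1
          have h0a' : (0:ℝ) < 1 - F (e (k : ℕ)) := by have := hF1.2; linarith
          have hF2 := hF (g • e (k : ℕ))
          have h0b : (0:ℝ) ≤ F (g • e (k : ℕ)) := le_trans (by norm_num) hF2.1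
          have h0b' : (0:ℝ) ≤ 1 - F (g • e (k : ℕ)) := by have := hF2.2; linarith
          rw [hμs]
          rw [bool_int' _ _ _ h0a.le h0a'.le]
          simp only [hw, if_true, if_false, Bool.false_eq_true]
          rw [mul_sqrt_div' _ _ h0a h0b, mul_sqrt_div' _ _ h0a' h0b']
  · -- lower bound
    classical
    have hinj : Function.Injective (fun k : Fin n => g • e (k : ℕ)) := by
      intro k l h
      have h1 : e (k : ℕ) = e (l : ℕ) := MulAction.injective g h
      exact Fin.val_injective (e.injective h1)
    have hsum : ∑ k : Fin n, (c g (g • e (k : ℕ)))^2 ≤ ∑' i : I, (c g i)^2 :=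
      calc ∑ k : Fin n, (c g (g • e (k : ℕ)))^2
          = ∑ i ∈ Finset.image (fun k : Fin n => g • e (k : ℕ)) Finset.univ, (c g i)^2 :=
            by rw [Finset.sum_image (fun x _ y _ h => hinj h)]
        _ ≤ ∑' i : I, (c g i)^2 := Summable.sum_le_tsum _ (fun i _ => sq_nonneg _) (hl2 g)
    have hfac : ∀ k : Fin n, Real.exp (-(3/5) * (c g (g • e (k : ℕ)))^2)
        ≤ Real.sqrt (F (e (k : ℕ)) * F (g • e (k : ℕ))) +
          Real.sqrt ((1 - F (e (k : ℕ))) * (1 - F (g • e (k : ℕ)))) := by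
      intro k
      have hcval : c g (g • e (k : ℕ)) = F (g • e (k : ℕ)) - F (e (k : ℕ)) := by
        rw [hc, inv_smul_smul]
      rw [hcval]
      have hk := key' (F (e (k : ℕ))) (F (g • e (k : ℕ))) (hF _) (hF _)
      have heq : (F (g • e (k : ℕ)) - F (e (k : ℕ)))^2
          = (F (e (k : ℕ)) - F (g • e (k : ℕ)))^2 := by ring
      rw [heq]
      exact hk
    calc Real.exp (-(3/5) * ∑' i : I, (c g i)^2)
        ≤ Real.exp (-(3/5) * ∑ k : Fin n, (c g (g • e (k : ℕ)))^2) :=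
          Real.exp_le_exp.2 (by linarith [hsum])
      _ = ∏ k : Fin n, Real.exp (-(3/5) * (c g (g • e (k : ℕ)))^2) := by
          rw [← Real.exp_sum, ← Finset.mul_sum]
      _ ≤ _ := Finset.prod_le_prod (fun k _ => (Real.exp_pos _).le) (fun k _ => hfac k)
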